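/- (Proposition 1) Let Y take values in a countable set and let X be a real-valued random variable such that for each value y of Y with P(Y = y) > 0, the conditional cumulative distribution function F_y(x) = P(X ≤ x | Y = y) is continuous in x. Define Z = F_Y(X), i.e., Z(ω) = F_{Y(ω)}(X(ω)). Then Z and Y are independent random variables, and Z is uniformly distributed on [0,1]. -/

import Mathlib

open MeasureTheory ProbabilityTheory Set Filter Topology
open scoped ENNReal

open MeasureTheory ProbabilityTheory Set Filter Topology

lemma pit_aux (μ : Measure ℝ) [IsProbabilityMeasure μ] (f : ℝ → ℝ)
    (hf : ∀ x, f x = (μ (Set.Iic x)).toReal) (hcont : Continuous f) :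
    Measure.map f μ = (volume : Measure ℝ).restrict (Set.Icc (0 : ℝ) 1) := by
  have hfc : f = cdf μ := funext fun x => by rw [hf, cdf_eq_real, measureReal_def]
  have hmono : Monotone f := hfc ▸ monotone_cdf μ
  have h0 : ∀ x, 0 ≤ f x := fun x => hfc ▸ cdf_nonneg μ x
  have h1 : ∀ x, f x ≤ 1 := fun x => hfc ▸ cdf_le_one μ x
  have htop : Tendsto f atTop (𝓝 1) := hfc ▸ tendsto_cdf_atTop μ
  have hbot : Tendsto f atBot (𝓝 0) := hfc ▸ tendsto_cdf_atBot μ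
  have hfm : Measurable f := hcont.measurable
  haveI : IsProbabilityMeasure (Measure.map f μ) :=
    Measure.isProbabilityMeasure_map hfm.aemeasurable
  refine Measure.ext_of_Iic _ _ (fun t => ?_)
  rw [Measure.map_apply hfm measurableSet_Iic,
    Measure.restrict_apply measurableSet_Iic]
  by_cases ht1 : 1 ≤ t
  · have hpre : f ⁻¹' Iic t = univ := eq_univ_of_forall fun x => (h1 x).trans ht1
    have hr : Iic t ∩ Icc (0:ℝ) 1 = Icc 0 1 :=
      inter_eq_self_of_subset_right fun x hx => hx.2.trans ht1
    rw [hpre, hr, measure_univ, Real.volume_Icc]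
    norm_num
  push_neg at ht1
  by_cases ht0 : t < 0
  · have hpre : f ⁻¹' Iic t = ∅ := by
      ext x; simp only [mem_preimage, mem_Iic, mem_empty_iff_false, iff_false, not_le]
      exact ht0.trans_le (h0 x)
    have hr : Iic t ∩ Icc (0:ℝ) 1 = ∅ := by
      ext x; simp only [mem_inter_iff, mem_Iic, mem_Icc, mem_empty_iff_false, iff_false]
      rintro ⟨h1', h2', -⟩; exact absurd (h2'.trans h1') (not_le.2 ht0)
    rw [hpre, hr]; simp
  push_neg at ht0
  -- 0 ≤ t < 1
  have hr : Iic t ∩ Icc (0:ℝ) 1 = Icc 0 t := by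
    ext x
    simp only [mem_inter_iff, mem_Iic, mem_Icc]
    constructor
    · rintro ⟨h1', h2', _⟩; exact ⟨h2', h1'⟩
    · rintro ⟨h1', h2'⟩; exact ⟨h2', h1', h2'.trans ht1.le⟩
  rw [hr, Real.volume_Icc, sub_zero]
  -- show μ {x | f x ≤ t} = ofReal t
  set S : Set ℝ := f ⁻¹' Iic t with hS
  have hbdd : BddAbove S := by
    obtain ⟨x₀, hx₀⟩ : ∃ x₀, t < f x₀ := (htop.eventually (eventually_gt_nhds ht1)).exists
    exact ⟨x₀, fun x hx => by
      by_contra hlt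
      exact absurd (hmono (not_le.1 hlt).le) (not_le.2 (lt_of_le_of_lt hx hx₀))⟩
  by_cases hne : S.Nonempty
  · have hclosed : IsClosed S := isClosed_Iic.preimage hcont
    set s := sSup S with hs
    have hsmem : s ∈ S := hclosed.csSup_mem hne hbdd
    have hfs_le : f s ≤ t := hsmem
    have hfs_ge : t ≤ f s := by
      by_contra hlt
      push_neg at hlt
      have hev : ∀ᶠ x in 𝓝 s, f x < t := (hcont.tendsto s).eventually (eventually_lt_nhds hlt)
      have hev' : ∀ᶠ x in 𝓝[>] s, f x < t := hev.filter_mono nhdsWithin_le_nhds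
      obtain ⟨x, hx1, hx2⟩ := (hev'.and self_mem_nhdsWithin).exists
      exact absurd (le_csSup hbdd (hx1.le : f x ≤ t)) (not_le.2 hx2)
    have hSeq : S = Iic s := by
      ext x
      constructor
      · exact fun hx => le_csSup hbdd hx
      · exact fun hx => le_trans (hmono hx) hfs_le
    have : f s = t := le_antisymm hfs_le hfs_ge
    rw [hSeq, ← this, hf s, ENNReal.ofReal_toReal (measure_ne_top μ _)]
  · have hempty : S = ∅ := not_nonempty_iff_eq_empty.1 hne
    have ht0' : t = 0 := by
      by_contra h
      have htpos : 0 < t := lt_of_le_of_ne ht0 (Ne.symm h)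
      obtain ⟨x, hx⟩ : ∃ x, f x < t := (hbot.eventually (eventually_lt_nhds htpos)).exists
      exact hne ⟨x, hx.le⟩
    rw [hempty, ht0']; simp

/-- Proposition 1: if for each value `y` of a countably-valued random variable `Y` with
`P(Y = y) > 0` the conditional CDF `F y` of `X` given `Y = y` is continuous, then
`Z = F_Y(X)` is independent of `Y` and uniformly distributed on `[0,1]`. -/
theorem quantile_mapping_indep_and_uniform
    {Ω T : Type*} [MeasurableSpace Ω] [MeasurableSpace T] [MeasurableSingletonClass T]
    [Countable T]
    (P : Measure Ω) [IsProbabilityMeasure P]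
    (X : Ω → ℝ) (hX : Measurable X) (Y : Ω → T) (hY : Measurable Y)
    (F : T → ℝ → ℝ) (hFmeas : Measurable (Function.uncurry F))
    (hF : ∀ y x, F y x = (P {ω | X ω ≤ x ∧ Y ω = y}).toReal / (P {ω | Y ω = y}).toReal)
    (hFcont : ∀ y, P {ω | Y ω = y} ≠ 0 → Continuous (F y)) :
    IndepFun (fun ω => F (Y ω) (X ω)) Y P ∧
      Measure.map (fun ω => F (Y ω) (X ω)) P
        = (volume : Measure ℝ).restrict (Set.Icc (0 : ℝ) 1) := by
  set Z : Ω → ℝ := fun ω => F (Y ω) (X ω) with hZdef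
  have hZ : Measurable Z := hFmeas.comp (hY.prodMk hX)
  set u : ℝ → ℝ≥0∞ := fun t => ((volume : Measure ℝ).restrict (Set.Icc (0:ℝ) 1)) (Set.Iic t)
    with hu
  -- per-y identity
  have hy : ∀ (t : ℝ) (y : T),
      P ({ω | F (Y ω) (X ω) ≤ t} ∩ Y ⁻¹' {y}) = u t * P (Y ⁻¹' {y}) := by
    intro t y
    have hYy : MeasurableSet (Y ⁻¹' {y}) := hY (measurableSet_singleton y)
    have hset : {ω | F (Y ω) (X ω) ≤ t} ∩ Y ⁻¹' {y}
        = X ⁻¹' (F y ⁻¹' Set.Iic t) ∩ Y ⁻¹' {y} := by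
      ext ω
      simp only [Set.mem_inter_iff, Set.mem_setOf_eq, Set.mem_preimage, Set.mem_singleton_iff,
        Set.mem_Iic]
      constructor
      · rintro ⟨h1, h2⟩; subst h2; exact ⟨h1, rfl⟩
      · rintro ⟨h1, h2⟩; subst h2; exact ⟨h1, rfl⟩
    rw [hset]
    by_cases hpy : P (Y ⁻¹' {y}) = 0
    · rw [hpy, mul_zero]
      exact measure_mono_null Set.inter_subset_right hpy
    · have hsetY : {ω | Y ω = y} = Y ⁻¹' {y} := by ext ω; simp
      haveI : IsProbabilityMeasure (P[|Y ⁻¹' {y}]) := cond_isProbabilityMeasure hpy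
      set μy : Measure ℝ := Measure.map X (P[|Y ⁻¹' {y}]) with hμy
      haveI : IsProbabilityMeasure μy := Measure.isProbabilityMeasure_map hX.aemeasurable
      have hfy : ∀ x, F y x = (μy (Set.Iic x)).toReal := by
        intro x
        rw [hμy, Measure.map_apply hX measurableSet_Iic, cond_apply hYy, hF]
        have hinter : Y ⁻¹' {y} ∩ X ⁻¹' Set.Iic x = {ω | X ω ≤ x ∧ Y ω = y} := by
          ext ω; simp [and_comm]
        rw [hinter, ENNReal.toReal_mul, ENNReal.toReal_inv, hsetY, div_eq_inv_mul]
      have hcy : Continuous (F y) := hFcont y (by rw [hsetY]; exact hpy)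
      have hpit := pit_aux μy (F y) hfy hcy
      have h2 : μy (F y ⁻¹' Set.Iic t) = u t := by
        rw [← Measure.map_apply hcy.measurable measurableSet_Iic, hpit]
      have h3 : P (X ⁻¹' (F y ⁻¹' Set.Iic t) ∩ Y ⁻¹' {y})
          = P (Y ⁻¹' {y}) * μy (F y ⁻¹' Set.Iic t) := by
        rw [hμy, Measure.map_apply hX (hcy.measurable measurableSet_Iic), cond_apply hYy,
          ← mul_assoc, ENNReal.mul_inv_cancel hpy (measure_ne_top P _), one_mul,
          Set.inter_comm]
      rw [h3, h2, mul_comm]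
  -- decomposition over the fibers of Y
  have hsum : ∀ (S : Set Ω), MeasurableSet S → ∀ (B : Set T),
      P (S ∩ Y ⁻¹' B) = ∑' y : B, P (S ∩ Y ⁻¹' {(y : T)}) := by
    intro S hSm B
    have hU : S ∩ Y ⁻¹' B = ⋃ y ∈ B, S ∩ Y ⁻¹' {y} := by
      ext ω; simp
    rw [hU, measure_biUnion (Set.to_countable B) ?_
      (fun y _ => hSm.inter (hY (measurableSet_singleton y)))]
    intro a _ b _ hab
    apply Set.disjoint_left.2
    rintro ω ⟨-, h1⟩ ⟨-, h2⟩
    exact hab ((Set.mem_singleton_iff.1 h1).symm.trans (Set.mem_singleton_iff.1 h2) ▸ rfl)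
  have hkey : ∀ (t : ℝ) (B : Set T),
      P ({ω | F (Y ω) (X ω) ≤ t} ∩ Y ⁻¹' B) = u t * P (Y ⁻¹' B) := by
    intro t B
    have hSm : MeasurableSet {ω | F (Y ω) (X ω) ≤ t} := hZ measurableSet_Iic
    have hB : P (Y ⁻¹' B) = ∑' y : B, P (Y ⁻¹' {(y : T)}) := by
      simpa using hsum Set.univ MeasurableSet.univ B
    rw [hsum _ hSm B, hB]
    rw [← ENNReal.tsum_mul_left]
    exact tsum_congr fun y => hy t y
  have hZt : ∀ t : ℝ, P (Z ⁻¹' Set.Iic t) = u t := by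
    intro t
    have := hkey t Set.univ
    simp at this
    exact this
  have hmap : Measure.map Z P = (volume : Measure ℝ).restrict (Set.Icc (0:ℝ) 1) := by
    haveI : IsProbabilityMeasure (Measure.map Z P) := Measure.isProbabilityMeasure_map hZ.aemeasurable
    refine Measure.ext_of_Iic _ _ fun t => ?_
    rw [Measure.map_apply hZ measurableSet_Iic, hZt t]
  refine ⟨?_, hmap⟩
  rw [indepFun_iff_measure_inter_preimage_eq_mul]
  intro A B hA hB
  have hYB : MeasurableSet (Y ⁻¹' B) := hY hB
  have heq : Measure.map Z (P.restrict (Y ⁻¹' B)) = P (Y ⁻¹' B) • Measure.map Z P := by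
    haveI : IsFiniteMeasure (Measure.map Z (P.restrict (Y ⁻¹' B))) := by
      constructor
      rw [Measure.map_apply hZ MeasurableSet.univ]
      exact measure_lt_top _ _
    refine Measure.ext_of_Iic _ _ fun t => ?_
    rw [Measure.map_apply hZ measurableSet_Iic, Measure.restrict_apply (hZ measurableSet_Iic),
      Measure.smul_apply, Measure.map_apply hZ measurableSet_Iic, smul_eq_mul, hZt t]
    rw [show Z ⁻¹' Set.Iic t = {ω | F (Y ω) (X ω) ≤ t} from rfl]
    rw [hkey t B, mul_comm]
  calc P (Z ⁻¹' A ∩ Y ⁻¹' B)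
      = Measure.map Z (P.restrict (Y ⁻¹' B)) A := by
        rw [Measure.map_apply hZ hA, Measure.restrict_apply (hZ hA)]
    _ = (P (Y ⁻¹' B) • Measure.map Z P) A := by rw [heq]
    _ = P (Z ⁻¹' A) * P (Y ⁻¹' B) := by
        rw [Measure.smul_apply, Measure.map_apply hZ hA, smul_eq_mul, mul_comm]
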